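/- Let (Ω, ℱ, ℙ) be a probability space, S : Ω → ℝ a random variable with continuous cumulative distribution function F, and let T be a real number. If ∫_Ω (1 − F(min(S(ω), T)))^{−1} ℙ(dω) < ∞, then ℙ(S > T) > 0. -/

import Mathlib

open MeasureTheory ProbabilityTheory Set Filter
open scoped ENNReal NNReal

/-- Single-jump case of Lemma 4.3: if `S` is a real random variable with continuous
cumulative distribution function `F = cdf (law of S)` and
`∫ (1 - F(min(S,T)))⁻¹ dP < ∞`, then `P(S > T) > 0`. -/
theorem pos_prob_of_finite_exp_moment {Ω : Type*} [MeasurableSpace Ω]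
    (P : Measure Ω) [IsProbabilityMeasure P] (S : Ω → ℝ) (hS : Measurable S)
    (hF : Continuous (cdf (Measure.map S P))) (T : ℝ)
    (hint : ∫⁻ ω, ENNReal.ofReal ((1 - cdf (Measure.map S P) (min (S ω) T))⁻¹) ∂P < ⊤) :
    0 < P {ω | T < S ω} := by
  set μ := Measure.map S P with hμ
  haveI : IsProbabilityMeasure μ := Measure.isProbabilityMeasure_map hS.aemeasurable
  set F := cdf μ with hFdef
  by_contra h
  push_neg at h
  have h0 : P {ω | T < S ω} = 0 := le_antisymm h (zero_le')
  -- F T = 1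
  have hμT : μ (Iic T) = 1 := by
    rw [hμ, Measure.map_apply hS measurableSet_Iic]
    rw [← prob_compl_eq_zero_iff (hS measurableSet_Iic)]
    have hc : (S ⁻¹' Iic T)ᶜ = {ω | T < S ω} := by
      ext ω; simp [not_le]
    rw [hc, h0]
  have hFT : F T = 1 := by
    rw [hFdef, cdf_eq_real, measureReal_def, hμT]; simp
  -- a point where F is ≤ 1/2, below T
  obtain ⟨a, ha⟩ : ∃ a, F a < 1/2 := by
    have := tendsto_cdf_atBot μ
    have h2 : ∀ᶠ x in atBot, F x < 1/2 := this.eventually_lt_const (by norm_num)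
    exact h2.exists
  set a' := min a T with ha'
  have ha'T : a' ≤ T := min_le_right _ _
  have hFa' : F a' < 1/2 := lt_of_le_of_lt (monotone_cdf μ (min_le_left a T)) ha
  -- choose t n with F (t n) = 1 - (1/2)^(n+1), t n ≤ T
  have ht : ∀ n : ℕ, ∃ t, a' ≤ t ∧ t ≤ T ∧ F t = 1 - (1/2 : ℝ)^(n+1) := by
    intro n
    have hy1 : F a' ≤ 1 - (1/2 : ℝ)^(n+1) := by
      have : (1/2 : ℝ)^(n+1) ≤ (1/2 : ℝ)^1 := by
        apply pow_le_pow_of_le_one (by norm_num) (by norm_num) (by omega)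
      nlinarith
    have hy2 : (1 - (1/2 : ℝ)^(n+1)) ≤ F T := by
      rw [hFT]
      have : (0:ℝ) ≤ (1/2 : ℝ)^(n+1) := by positivity
      linarith
    have := intermediate_value_Icc ha'T (hF.continuousOn (s := Icc a' T))
    obtain ⟨t, htmem, htF⟩ := this ⟨hy1, hy2⟩
    exact ⟨t, htmem.1, htmem.2, htF⟩
  choose t hta htT htF using ht
  have htmono : StrictMono t := by
    apply strictMono_nat_of_lt_succ
    intro n
    by_contra hle
    push_neg at hle
    have := monotone_cdf μ hle
    rw [htF, htF] at this
    have : (1/2 : ℝ)^(n+1+1) ≥ (1/2 : ℝ)^(n+1) := by linarith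
    have h2 : (1/2 : ℝ)^(n+1+1) < (1/2 : ℝ)^(n+1) := by
      apply pow_lt_pow_right_of_lt_one₀ (by norm_num) (by norm_num) (by omega)
    linarith
  -- annuli
  set A : ℕ → Set Ω := fun n => S ⁻¹' Ioc (t n) (t (n+1)) with hA
  have hAm : ∀ n, MeasurableSet (A n) := fun n => hS measurableSet_Ioc
  have hAdisj : Pairwise (Function.onFun Disjoint A) := by
    intro n m hnm
    have key : ∀ i j : ℕ, i < j → Disjoint (Ioc (t i) (t (i+1))) (Ioc (t j) (t (j+1))) := by
      intro i j hij
      apply Set.Ioc_disjoint_Ioc.mpr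
      calc min (t (i+1)) (t (j+1)) ≤ t (i+1) := min_le_left _ _
        _ ≤ t j := htmono.monotone (by omega)
        _ ≤ max (t i) (t j) := le_max_right _ _
    rcases lt_or_gt_of_ne hnm with hlt | hlt
    · exact (key n m hlt).preimage S
    · exact ((key m n hlt).preimage S).symm
  -- measure of annuli
  have hmeasμ : (cdf μ).measure = μ := measure_cdf μ
  have hPA : ∀ n, P (A n) = ENNReal.ofReal ((1/2 : ℝ)^(n+2)) := by
    intro n
    have : P (A n) = μ (Ioc (t n) (t (n+1))) := by
      rw [hμ, Measure.map_apply hS measurableSet_Ioc]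
    rw [this, ← hmeasμ, StieltjesFunction.measure_Ioc]
    congr 1
    rw [← hFdef, htF, htF]
    ring
  -- pointwise lower bound on A n
  have hbound : ∀ n, ∀ ω ∈ A n,
      ENNReal.ofReal ((2:ℝ)^(n+1)) ≤ ENNReal.ofReal ((1 - F (min (S ω) T))⁻¹) := by
    intro n ω hω
    obtain ⟨h1, h2⟩ := hω
    apply ENNReal.ofReal_le_ofReal
    have hmin1 : t n ≤ min (S ω) T := le_min h1.le (htT n)
    have hmin2 : min (S ω) T ≤ t (n+1) := le_trans (min_le_left _ _) h2
    have hFlo : 1 - (1/2 : ℝ)^(n+1) ≤ F (min (S ω) T) := by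
      rw [← htF n]; exact monotone_cdf μ hmin1
    have hFhi : F (min (S ω) T) ≤ 1 - (1/2 : ℝ)^(n+2) := by
      rw [← htF (n+1)]; exact monotone_cdf μ hmin2
    have hpos : (0:ℝ) < 1 - F (min (S ω) T) := by
      have : (0:ℝ) < (1/2 : ℝ)^(n+2) := by positivity
      linarith
    rw [← one_div, le_div_iff₀ hpos]
    have hle : 1 - F (min (S ω) T) ≤ (1/2 : ℝ)^(n+1) := by linarith
    calc (2:ℝ)^(n+1) * (1 - F (min (S ω) T)) ≤ (2:ℝ)^(n+1) * (1/2 : ℝ)^(n+1) := by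
          apply mul_le_mul_of_nonneg_left hle (by positivity)
      _ = 1 := by
          rw [← mul_pow]; norm_num
  -- integral lower bound
  have hlow : ∀ n, (ENNReal.ofReal (1/2 : ℝ)) ≤ ∫⁻ ω in A n,
      ENNReal.ofReal ((1 - F (min (S ω) T))⁻¹) ∂P := by
    intro n
    calc ENNReal.ofReal (1/2 : ℝ)
        = ENNReal.ofReal ((2:ℝ)^(n+1)) * ENNReal.ofReal ((1/2:ℝ)^(n+2)) := by
          rw [← ENNReal.ofReal_mul (by positivity)]
          congr 1
          have e1 : ((1:ℝ)/2)^(n+2) = (1/2 : ℝ)^(n+1) * (1/2) := by ring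
          have e2 : (2:ℝ)^(n+1) * (1/2 : ℝ)^(n+1) = 1 := by rw [← mul_pow]; norm_num
          rw [e1, ← mul_assoc, e2, one_mul]
      _ = ENNReal.ofReal ((2:ℝ)^(n+1)) * P (A n) := by rw [hPA n]
      _ = ∫⁻ _ in A n, ENNReal.ofReal ((2:ℝ)^(n+1)) ∂P := by
          rw [setLIntegral_const]
      _ ≤ ∫⁻ ω in A n, ENNReal.ofReal ((1 - F (min (S ω) T))⁻¹) ∂P :=
          setLIntegral_mono' (hAm n) (hbound n)
  have htop : (⊤ : ℝ≥0∞) ≤ ∫⁻ ω, ENNReal.ofReal ((1 - F (min (S ω) T))⁻¹) ∂P := by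
    calc (⊤ : ℝ≥0∞) = ∑' _ : ℕ, ENNReal.ofReal (1/2 : ℝ) := by
          rw [ENNReal.tsum_const_eq_top_of_ne_zero]
          simp
      _ ≤ ∑' n, ∫⁻ ω in A n, ENNReal.ofReal ((1 - F (min (S ω) T))⁻¹) ∂P :=
          ENNReal.tsum_le_tsum hlow
      _ = ∫⁻ ω in ⋃ n, A n, ENNReal.ofReal ((1 - F (min (S ω) T))⁻¹) ∂P :=
          (lintegral_iUnion hAm hAdisj _).symm
      _ ≤ ∫⁻ ω, ENNReal.ofReal ((1 - F (min (S ω) T))⁻¹) ∂P :=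
          setLIntegral_le_lintegral _ _
  exact absurd (lt_of_le_of_lt htop hint) (lt_irrefl _)
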